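/- Let k ≥ 0, a ≥ 1, b ≥ 0 be integers, and define g_{k,a,b}(n) = (∏_{i=0}^{k} (b+(n+i)a)) / lcm(b+na, b+(n+1)a, ..., b+(n+k)a) for positive integers n. Then L_k := lcm(1,2,...,k) is a period of g_{k,a,b}, i.e., g_{k,a,b}(n + L_k) = g_{k,a,b}(n) for all n ≥ 1. -/

import Mathlib

theorem mygcd_lcm_distrib (a b c : ℕ) (ha : a ≠ 0) (hb : b ≠ 0) (hc : c ≠ 0) :
    Nat.gcd (Nat.lcm a b) c = Nat.lcm (Nat.gcd a c) (Nat.gcd b c) := by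
  have h1 : Nat.lcm a b ≠ 0 := Nat.lcm_ne_zero ha hb
  have h2 : Nat.gcd a c ≠ 0 := Nat.gcd_ne_zero_left ha
  have h3 : Nat.gcd b c ≠ 0 := Nat.gcd_ne_zero_left hb
  have h4 : Nat.gcd (Nat.lcm a b) c ≠ 0 := Nat.gcd_ne_zero_right hc
  have h5 : Nat.lcm (Nat.gcd a c) (Nat.gcd b c) ≠ 0 := Nat.lcm_ne_zero h2 h3
  apply Nat.factorization_inj (by simpa using h4) (by simpa using h5)
  rw [Nat.factorization_gcd h1 hc, Nat.factorization_lcm ha hb,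
    Nat.factorization_lcm h2 h3, Nat.factorization_gcd ha hc, Nat.factorization_gcd hb hc]
  ext p
  simp only [Finsupp.inf_apply, Finsupp.sup_apply]
  exact inf_sup_right _ _ _

theorem myfinset_distrib {ι : Type*} [DecidableEq ι] (s : Finset ι) (f : ι → ℕ) (c : ℕ)
    (hf : ∀ i ∈ s, f i ≠ 0) (hc : c ≠ 0) :
    Nat.gcd (s.lcm f) c = s.lcm fun i => Nat.gcd (f i) c := by
  induction s using Finset.induction with
  | empty => simp [Nat.lcm]
  | insert x s hx ih =>
    rw [Finset.lcm_insert, Finset.lcm_insert]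
    have h1 : f x ≠ 0 := hf x (Finset.mem_insert_self _ _)
    have h2 : s.lcm f ≠ 0 := by
      simp only [Ne, Finset.lcm_eq_zero_iff, Set.mem_image]
      rintro ⟨i, hi, h0⟩
      exact hf i (Finset.mem_insert_of_mem hi) h0
    rw [show (lcm (f x) (s.lcm f) : ℕ) = Nat.lcm (f x) (s.lcm f) from rfl]
    rw [mygcd_lcm_distrib _ _ _ h1 h2 hc, ih fun i hi => hf i (Finset.mem_insert_of_mem hi)]
    rfl

theorem mylcm_dvd_prod (k : ℕ) (f : ℕ → ℕ) :
    (Finset.range k).lcm f ∣ ∏ i ∈ Finset.range k, f i := by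
  induction k with
  | zero => simp
  | succ k ih =>
    rw [Finset.range_add_one, Finset.lcm_insert, Finset.prod_insert (by simp)]
    exact lcm_dvd (dvd_mul_right _ _) (ih.mul_left _)

theorem mykey (a b n m : ℕ) (ha : 1 ≤ a) (hn : 1 ≤ n) :
    ∀ k : ℕ, (∀ i, 1 ≤ i → i ≤ k → i ∣ m) →
    (∏ i ∈ Finset.range (k+1), (b + (n + m + i) * a)) *
      (Finset.range (k+1)).lcm (fun i => b + (n + i) * a) =
    (∏ i ∈ Finset.range (k+1), (b + (n + i) * a)) *
      (Finset.range (k+1)).lcm (fun i => b + (n + m + i) * a) := by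
  set y : ℕ → ℕ := fun i => b + (n + i) * a with hy
  set z : ℕ → ℕ := fun i => b + (n + m + i) * a with hzdef
  have hypos : ∀ i, y i ≠ 0 := by
    intro i
    have : 0 < (n + i) * a := Nat.mul_pos (by omega) ha
    simp only [hy]; omega
  have hzpos : ∀ i, z i ≠ 0 := by
    intro i
    have : 0 < (n + m + i) * a := Nat.mul_pos (by omega) ha
    simp only [hzdef]; omega
  have hz : ∀ i, z i = y i + m * a := by intro i; simp only [hy, hzdef]; ring
  intro k
  induction k with
  | zero =>
    intro _
    simp only [zero_add, Finset.range_one, Finset.prod_singleton, Finset.lcm_singleton]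
    show z 0 * normalize (y 0) = y 0 * normalize (z 0)
    rw [normalize_eq, normalize_eq, mul_comm]
  | succ k ih =>
    intro hm
    have hl : ∀ f : ℕ → ℕ, (Finset.range (k+2)).lcm f
        = Nat.lcm (f (k+1)) ((Finset.range (k+1)).lcm f) := by
      intro f
      rw [Finset.range_add_one, Finset.lcm_insert]; rfl
    rw [Finset.prod_range_succ z (k+1), Finset.prod_range_succ y (k+1), hl, hl]
    set P : ℕ := ∏ i ∈ Finset.range (k+1), y i
    set P' : ℕ := ∏ i ∈ Finset.range (k+1), z i
    set M : ℕ := (Finset.range (k+1)).lcm y with hM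
    set M' : ℕ := (Finset.range (k+1)).lcm z with hM'
    have hMpos : M ≠ 0 := by
      simp only [hM, Ne, Finset.lcm_eq_zero_iff, Set.mem_image]
      rintro ⟨i, _, h0⟩; exact hypos i h0
    have hM'pos : M' ≠ 0 := by
      simp only [hM', Ne, Finset.lcm_eq_zero_iff, Set.mem_image]
      rintro ⟨i, _, h0⟩; exact hzpos i h0
    have ihP : P' * M = P * M' := ih fun i h1 h2 => hm i h1 (by omega)
    -- the gcd terms agree
    have hG : Nat.gcd M' (z (k+1)) = Nat.gcd M (y (k+1)) := by
      rw [myfinset_distrib _ _ _ (fun i _ => hzpos i) (hzpos (k+1)),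
          myfinset_distrib _ _ _ (fun i _ => hypos i) (hypos (k+1))]
      apply Finset.lcm_congr rfl
      intro i hi
      have hik : i ≤ k := by simpa using Nat.lt_succ_iff.mp (Finset.mem_range.mp hi)
      have hdiff : (k + 1 - i) ∣ m := hm (k + 1 - i) (by omega) (by omega)
      obtain ⟨t, ht⟩ := hdiff
      have h1 : y (k+1) = y i + (k + 1 - i) * a := by
        simp only [hy]
        have : n + (k+1) = (n + i) + (k + 1 - i) := by omega
        rw [this, Nat.add_mul]; ring
      have h2 : z (k+1) = z i + (k + 1 - i) * a := by
        simp only [hzdef]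
        have : n + m + (k+1) = (n + m + i) + (k + 1 - i) := by omega
        rw [this, Nat.add_mul]; ring
      have h3 : Nat.gcd (y i) (y (k+1)) = Nat.gcd (y i) ((k+1-i) * a) := by
        rw [h1, Nat.add_comm (y i), Nat.gcd_add_self_right]
      have h4 : Nat.gcd (z i) (z (k+1)) = Nat.gcd (z i) ((k+1-i) * a) := by
        rw [h2, Nat.add_comm (z i), Nat.gcd_add_self_right]
      have h5 : Nat.gcd (z i) ((k+1-i) * a) = Nat.gcd (y i) ((k+1-i) * a) := by
        rw [hz i, ht]
        rw [show (k + 1 - i) * t * a = t * ((k+1-i) * a) by ring]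
        exact Nat.gcd_add_mul_right_left _ _ _
      rw [h3, h4, h5]
    -- main computation
    have Gpos : 0 < Nat.gcd M (y (k+1)) :=
      Nat.gcd_pos_of_pos_right _ (Nat.pos_of_ne_zero (hypos _))
    apply Nat.eq_of_mul_eq_mul_right Gpos
    calc P' * z (k+1) * Nat.lcm (y (k+1)) M * Nat.gcd M (y (k+1))
        = P' * z (k+1) * (Nat.gcd (y (k+1)) M * Nat.lcm (y (k+1)) M) := by
          rw [Nat.gcd_comm]; ring
      _ = P' * z (k+1) * (y (k+1) * M) := by rw [Nat.gcd_mul_lcm]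
      _ = (P' * M) * (z (k+1) * y (k+1)) := by ring
      _ = (P * M') * (z (k+1) * y (k+1)) := by rw [ihP]
      _ = P * y (k+1) * (z (k+1) * M') := by ring
      _ = P * y (k+1) * (Nat.gcd (z (k+1)) M' * Nat.lcm (z (k+1)) M') := by
          rw [Nat.gcd_mul_lcm]
      _ = P * y (k+1) * Nat.lcm (z (k+1)) M' * Nat.gcd M' (z (k+1)) := by
          rw [Nat.gcd_comm]; ring
      _ = P * y (k+1) * Nat.lcm (z (k+1)) M' * Nat.gcd M (y (k+1)) := by rw [hG]
theorem stmt3 (k a b : ℕ) (ha : 1 ≤ a) (n : ℕ) (hn : 1 ≤ n) :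
    (∏ i ∈ Finset.range (k+1), (b + (n + (Finset.Icc 1 k).lcm id + i) * a)) /
      (Finset.range (k+1)).lcm (fun i => b + (n + (Finset.Icc 1 k).lcm id + i) * a) =
    (∏ i ∈ Finset.range (k+1), (b + (n + i) * a)) /
      (Finset.range (k+1)).lcm (fun i => b + (n + i) * a) := by
  set m : ℕ := (Finset.Icc 1 k).lcm id with hmdef
  have hm : ∀ i, 1 ≤ i → i ≤ k → i ∣ m := fun i h1 h2 =>
    Finset.dvd_lcm (Finset.mem_Icc.mpr ⟨h1, h2⟩)
  have key := mykey a b n m ha hn k hm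
  set P : ℕ := ∏ i ∈ Finset.range (k+1), (b + (n + i) * a) with hP
  set P' : ℕ := ∏ i ∈ Finset.range (k+1), (b + (n + m + i) * a) with hP'
  set M : ℕ := (Finset.range (k+1)).lcm (fun i => b + (n + i) * a) with hM
  set M' : ℕ := (Finset.range (k+1)).lcm (fun i => b + (n + m + i) * a) with hM'
  have hMdvd : M ∣ P := mylcm_dvd_prod _ _
  have hM'dvd : M' ∣ P' := mylcm_dvd_prod _ _
  have hPpos : P ≠ 0 := by
    rw [hP]
    apply Finset.prod_ne_zero_iff.mpr
    intro i _
    have : 0 < (n + i) * a := Nat.mul_pos (by omega) ha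
    omega
  have hP'pos : P' ≠ 0 := by
    rw [hP']
    apply Finset.prod_ne_zero_iff.mpr
    intro i _
    have : 0 < (n + m + i) * a := Nat.mul_pos (by omega) ha
    omega
  obtain ⟨q, hq⟩ := hMdvd
  have hM0 : M ≠ 0 := fun h => hPpos (by rw [hq, h, zero_mul])
  have hM'0 : M' ≠ 0 := fun h => hP'pos (by
    obtain ⟨r, hr⟩ := hM'dvd
    rw [hr, h, zero_mul])
  have hP'q : P' = q * M' := by
    have : M * P' = M * (q * M') := by
      rw [mul_comm M P', key, hq]; ring
    exact Nat.eq_of_mul_eq_mul_left (Nat.pos_of_ne_zero hM0) this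
  show P' / M' = P / M
  rw [hP'q, hq, Nat.mul_div_cancel q (Nat.pos_of_ne_zero hM'0),
    mul_comm, Nat.mul_div_cancel q (Nat.pos_of_ne_zero hM0)]
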